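/- Let f satisfy −f'' + (t+α)² f = (1/b)(1 − f²) f on [0,∞) with 0 ≤ f ≤ 1, f'(0) = 0, and f(t) → 0 as t → ∞, where b > 1 and α ∈ ℝ. Then there exists a constant C > 0 such that f(t) ≤ C exp(−(t+α)²/2) for all t ≥ 0. -/

import Mathlib

/-- Gaussian decay for a solution of the 1D variational equation on the half-line:
if `-f'' + (t+α)² f = (1/b)(1-f²) f` on `[0,∞)` with `0 ≤ f ≤ 1`, `f'(0) = 0`, and
`f(t) → 0` at infinity, then `f(t) ≤ C exp(-(t+α)²/2)`. -/
theorem gaussian_decay (b α : ℝ) (hb : 1 < b) (f : ℝ → ℝ)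
    (hreg : ContDiff ℝ 2 f)
    (hode : ∀ t ≥ (0:ℝ),
      -(deriv (deriv f) t) + (t + α) ^ 2 * f t = (1 / b) * (1 - f t ^ 2) * f t)
    (hbounds : ∀ t ≥ (0:ℝ), 0 ≤ f t ∧ f t ≤ 1)
    (hneu : deriv f 0 = 0)
    (hlim : Filter.Tendsto f Filter.atTop (nhds 0)) :
    ∃ C > 0, ∀ t ≥ (0:ℝ), f t ≤ C * Real.exp (-(t + α) ^ 2 / 2) := by
  -- basic data
  set T : ℝ := |α| + 1 with hTdef
  set C : ℝ := Real.exp ((T + |α|) ^ 2 / 2) with hCdef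
  have hCpos : 0 < C := Real.exp_pos _
  have hT0 : (0:ℝ) < T := by positivity
  -- the Gaussian g and its derivatives
  set g : ℝ → ℝ := (fun t => Real.exp (-(t + α) ^ 2 / 2)) with hgdef
  have hgpos : ∀ t, 0 < g t := fun t => Real.exp_pos _
  have hgd : ∀ t : ℝ, HasDerivAt g (-(t + α) * g t) t := by
    intro t
    have h1 : HasDerivAt (fun t : ℝ => -(t + α) ^ 2 / 2) (-(t + α)) t := by
      have h0 : HasDerivAt (fun t : ℝ => t + α) 1 t := (hasDerivAt_id t).add_const α
      have h2 := ((h0.pow 2).neg).div_const 2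
      refine h2.congr_deriv ?_
      norm_num
      ring
    have := h1.exp
    simpa [hgdef, mul_comm] using this
  have hgd2 : ∀ t : ℝ, HasDerivAt (fun t => -(t + α) * g t)
      (((t + α) ^ 2 - 1) * g t) t := by
    intro t
    have h1 : HasDerivAt (fun t : ℝ => -(t + α)) (-1) t :=
      ((hasDerivAt_id t).add_const α).neg
    have := h1.mul (hgd t)
    refine this.congr_deriv ?_
    ring
  have hgderiv : deriv g = fun t => -(t + α) * g t := funext fun t => (hgd t).deriv
  -- regularity of f
  have hf1 : Differentiable ℝ f := hreg.differentiable (by norm_num)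
  have hdf : Differentiable ℝ (deriv f) := by
    have h : ContDiff ℝ ((1:WithTop ℕ∞) + 1) f := by convert hreg using 2; norm_num
    exact ((contDiff_succ_iff_deriv.mp h).2.2).differentiable one_ne_zero
  -- the comparison function
  set φ : ℝ → ℝ := (fun t => f t - C * g t) with hφdef
  have hφd : ∀ t : ℝ, HasDerivAt φ (deriv f t - C * (-(t + α) * g t)) t := fun t =>
    ((hf1 t).hasDerivAt).sub ((hgd t).const_mul C)
  have hφderiv : deriv φ = fun t => deriv f t - C * (-(t + α) * g t) :=
    funext fun t => (hφd t).deriv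
  have hφd2 : ∀ t : ℝ, HasDerivAt (deriv φ)
      (deriv (deriv f) t - C * (((t + α) ^ 2 - 1) * g t)) t := by
    intro t
    rw [hφderiv]
    exact ((hdf t).hasDerivAt).sub ((hgd2 t).const_mul C)
  have hφcont : Continuous φ := hf1.continuous.sub (continuous_const.mul (by fun_prop))
  have hφdcont : Continuous (deriv φ) := by
    rw [hφderiv]
    exact hdf.continuous.sub (continuous_const.mul (by fun_prop))
  -- key second-derivative positivity
  have hb0 : (0:ℝ) < b := lt_trans one_pos hb
  have hkey : ∀ x : ℝ, T ≤ x → 0 < φ x → 0 < deriv (deriv φ) x := by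
    intro x hx hφx
    have hx0 : (0:ℝ) ≤ x := le_trans hT0.le hx
    have hfx := hbounds x hx0
    have hodex := hode x hx0
    have hd2 : deriv (deriv φ) x = deriv (deriv f) x - C * (((x + α) ^ 2 - 1) * g x) :=
      (hφd2 x).deriv
    have hsq : 1 ≤ (x + α) ^ 2 := by
      have h1 : 1 ≤ x + α := by
        have := neg_abs_le α
        simp only [hTdef] at hx
        linarith
      nlinarith
    have hbinv : 1 / b < 1 := by
      rw [div_lt_one hb0]; exact hb
    have hbinv0 : 0 < 1 / b := by positivity
    have hcube : 0 ≤ f x ^ 3 := pow_nonneg hfx.1 3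
    have hgx := hgpos x
    have hφval : φ x = f x - C * g x := rfl
    rw [hd2]
    nlinarith [mul_pos hCpos hgx, mul_nonneg hbinv0.le hcube,
      mul_le_mul_of_nonneg_left hφx.le (sub_nonneg.mpr (le_trans hbinv.le hsq)),
      mul_pos (sub_pos.mpr hbinv) (mul_pos hCpos hgx)]
  -- φ ≤ 0 at T (indeed on [0, T])
  have hstart : ∀ t : ℝ, 0 ≤ t → t ≤ T → f t ≤ C * g t := by
    intro t ht0 htT
    have h1 : (t + α) ^ 2 ≤ (T + |α|) ^ 2 := by
      have ha : -(T + |α|) ≤ t + α := by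
        have := neg_abs_le α
        linarith
      have hb' : t + α ≤ T + |α| := by
        have := le_abs_self α
        linarith
      nlinarith
    have h2 : (1:ℝ) ≤ C * g t := by
      have e : C * g t = Real.exp ((T + |α|) ^ 2 / 2 + -(t + α) ^ 2 / 2) :=
        (Real.exp_add _ _).symm
      rw [e]
      apply Real.one_le_exp
      nlinarith
    exact le_trans (hbounds t ht0).2 h2
  -- tendsto of φ
  have hgtend : Filter.Tendsto g Filter.atTop (nhds 0) := by
    have h1 : Filter.Tendsto (fun t : ℝ => t + α) Filter.atTop Filter.atTop :=
      Filter.tendsto_atTop_add_const_right _ _ Filter.tendsto_id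
    have h2 : Filter.Tendsto (fun t : ℝ => (t + α) ^ 2) Filter.atTop Filter.atTop := by
      have := h1.atTop_mul_atTop₀ h1
      simpa [sq] using this
    have h3 : Filter.Tendsto (fun t : ℝ => -(t + α) ^ 2 / 2) Filter.atTop Filter.atBot := by
      apply Filter.Tendsto.atBot_div_const (by norm_num : (0:ℝ) < 2)
      exact Filter.tendsto_neg_atBot_iff.mpr h2
    exact Real.tendsto_exp_atBot.comp h3
  have hφtend : Filter.Tendsto φ Filter.atTop (nhds 0) := by
    have := hlim.sub (hgtend.const_mul C)
    simpa using this
  -- maximum principle: φ ≤ 0 on [T, ∞)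
  have hmain : ∀ t : ℝ, T ≤ t → φ t ≤ 0 := by
    by_contra hcon
    push_neg at hcon
    obtain ⟨s, hsT, hspos⟩ := hcon
    -- eventually φ < φ s
    have hev : ∀ᶠ x in Filter.atTop, φ x < φ s :=
      hφtend.eventually_lt_const hspos
    obtain ⟨R, hR⟩ := Filter.eventually_atTop.mp hev
    set R' : ℝ := max R s with hR'def
    have hsR' : s ≤ R' := le_max_right _ _
    have hTR' : T ≤ R' := le_trans hsT hsR'
    obtain ⟨t₀, ht₀mem, ht₀max⟩ :=
      (isCompact_Icc (a := T) (b := R')).exists_isMaxOn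
        (Set.nonempty_Icc.mpr hTR') (hφcont.continuousOn)
    have hsmem : s ∈ Set.Icc T R' := ⟨hsT, hsR'⟩
    have ht₀pos : 0 < φ t₀ := lt_of_lt_of_le hspos (ht₀max hsmem)
    -- t₀ is a global max on [T, ∞)
    have hglobal : ∀ x : ℝ, T ≤ x → φ x ≤ φ t₀ := by
      intro x hx
      rcases le_or_gt x R' with h | h
      · exact ht₀max ⟨hx, h⟩
      · have hxR : R ≤ x := le_trans (le_max_left R s) h.le
        exact le_trans (hR x hxR).le (ht₀max hsmem)
    have ht₀T : T < t₀ := by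
      rcases lt_or_eq_of_le ht₀mem.1 with h | h
      · exact h
      · exfalso
        have := hstart T hT0.le le_rfl
        have : φ T ≤ 0 := by simp only [hφdef]; linarith
        rw [← h] at ht₀pos
        linarith
    -- local max ⇒ deriv φ t₀ = 0
    have hloc : IsLocalMax φ t₀ := by
      filter_upwards [Ioi_mem_nhds ht₀T] with x hx
      exact hglobal x (le_of_lt hx)
    have hderiv0 : deriv φ t₀ = 0 := hloc.deriv_eq_zero
    -- a small interval to the right where φ > 0
    have hnbhd : {x : ℝ | 0 < φ x} ∈ nhds t₀ :=
      (isOpen_Ioi.preimage hφcont).mem_nhds ht₀pos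
    obtain ⟨ε, hε, hball⟩ := Metric.mem_nhds_iff.mp hnbhd
    set δ : ℝ := ε / 2 with hδdef
    have hδpos : 0 < δ := by positivity
    have hsub : Set.Icc t₀ (t₀ + δ) ⊆ {x : ℝ | 0 < φ x} := by
      intro x hx
      apply hball
      rw [Metric.mem_ball, Real.dist_eq, abs_lt]
      constructor <;> [linarith [hx.1]; linarith [hx.2, hε]]
    -- deriv φ is strictly increasing on [t₀, t₀+δ]
    have hmono1 : StrictMonoOn (deriv φ) (Set.Icc t₀ (t₀ + δ)) := by
      apply strictMonoOn_of_deriv_pos (convex_Icc _ _) (hφdcont.continuousOn)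
      intro x hx
      rw [interior_Icc] at hx
      have hxT : T ≤ x := le_trans ht₀T.le hx.1.le
      exact hkey x hxT (hsub ⟨hx.1.le, hx.2.le⟩)
    -- hence deriv φ > 0 on (t₀, t₀+δ), hence φ strictly increasing
    have hmono2 : StrictMonoOn φ (Set.Icc t₀ (t₀ + δ)) := by
      apply strictMonoOn_of_deriv_pos (convex_Icc _ _) (hφcont.continuousOn)
      intro x hx
      rw [interior_Icc] at hx
      have := hmono1 (Set.left_mem_Icc.mpr (by linarith)) ⟨hx.1.le, hx.2.le⟩ hx.1
      rw [hderiv0] at this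
      exact this
    have hcontr : φ t₀ < φ (t₀ + δ) :=
      hmono2 (Set.left_mem_Icc.mpr (by linarith)) (Set.right_mem_Icc.mpr (by linarith))
        (by linarith)
    have : φ (t₀ + δ) ≤ φ t₀ := hglobal _ (by linarith [ht₀T.le])
    linarith
  -- conclusion
  refine ⟨C, hCpos, fun t ht => ?_⟩
  rcases le_or_gt t T with h | h
  · exact hstart t ht h
  · have := hmain t h.le
    simp only [hφdef] at this
    linarith
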